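/- Let χ ∈ span{1, x, y, x²−y²} on the rectangle Q = [0,h]×[0,k]. If all four edge averages of χ are zero, then χ = 0. Consequently the integral mean of χ over Q is a linear combination of its four edge averages, with coefficients depending only on h and k. -/
import Mathlib


open MeasureTheory

lemma poly_int (L p q r : ℝ) :
    ∫ t in (0:ℝ)..L, (p + q*t + r*t^2) = p*L + q*L^2/2 + r*L^3/3 := by
  have hderiv : ∀ t ∈ Set.uIcc (0:ℝ) L,
      HasDerivAt (fun t : ℝ => p*t + q*t^2/2 + r*t^3/3) (p + q*t + r*t^2) t := by
    intro t _
    have : HasDerivAt (fun t : ℝ => p*t + q*t^2/2 + r*t^3/3)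
        (p*1 + q*(2*t^1)/2 + r*(3*t^2)/3) t :=
      (((hasDerivAt_id t).const_mul p).add
        (((hasDerivAt_pow 2 t).const_mul q).div_const 2)).add
        (((hasDerivAt_pow 3 t).const_mul r).div_const 3)
    simpa using this.congr_deriv (by ring)
  have hcont : IntervalIntegrable (fun t : ℝ => p + q*t + r*t^2) volume 0 L :=
    (Continuous.intervalIntegrable (by continuity)) _ _
  have := intervalIntegral.integral_eq_sub_of_hasDerivAt hderiv hcont
  simpa using this.trans (by ring)

/-- The Rannacher–Turek shape function `a + b x + c y + d (x² − y²)`. -/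
noncomputable def rtphi (a b c d x y : ℝ) : ℝ := a + b*x + c*y + d*(x^2 - y^2)

/-- Edge averages of `rtphi a b c d` over the four edges (bottom, right, top,
left) of `Q = [0,h]×[0,k]`. -/
noncomputable def rtEdgeAvg (h k a b c d : ℝ) : Fin 4 → ℝ :=
  ![(1/h) * ∫ t in (0:ℝ)..h, rtphi a b c d t 0,
    (1/k) * ∫ t in (0:ℝ)..k, rtphi a b c d h t,
    (1/h) * ∫ t in (0:ℝ)..h, rtphi a b c d t k,
    (1/k) * ∫ t in (0:ℝ)..k, rtphi a b c d 0 t]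

/-- If `χ ∈ span{1,x,y,x²−y²}` has all four edge averages on `Q = [0,h]×[0,k]`
equal to zero, then `χ = 0`; consequently the mean of `χ` over `Q` is a linear
combination of its four edge averages with weights depending only on `h` and `k`. -/
theorem stmt19 (h k : ℝ) (hh : 0 < h) (hk : 0 < k) :
    (∀ a b c d : ℝ, (∀ i : Fin 4, rtEdgeAvg h k a b c d i = 0) →
        ∀ x y : ℝ, rtphi a b c d x y = 0)
    ∧ ∃ w : Fin 4 → ℝ, ∀ a b c d : ℝ,
        (1/(h*k)) * ∫ x in (0:ℝ)..h, ∫ y in (0:ℝ)..k, rtphi a b c d x y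
          = ∑ i : Fin 4, w i * rtEdgeAvg h k a b c d i := by
  have hh' : h ≠ 0 := hh.ne'
  have hk' : k ≠ 0 := hk.ne'
  have hS : (0:ℝ) < h^2 + k^2 := by positivity
  have E0 : ∀ a b c d : ℝ, (∫ t in (0:ℝ)..h, rtphi a b c d t 0)
      = a*h + b*h^2/2 + d*h^3/3 := by
    intro a b c d
    rw [← poly_int h a b d]
    apply intervalIntegral.integral_congr
    intro t _; simp only [rtphi]; ring
  have E1 : ∀ a b c d : ℝ, (∫ t in (0:ℝ)..k, rtphi a b c d h t)
      = (a + b*h + d*h^2)*k + c*k^2/2 + (-d)*k^3/3 := by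
    intro a b c d
    rw [← poly_int k (a + b*h + d*h^2) c (-d)]
    apply intervalIntegral.integral_congr
    intro t _; simp only [rtphi]; ring
  have E2 : ∀ a b c d : ℝ, (∫ t in (0:ℝ)..h, rtphi a b c d t k)
      = (a + c*k - d*k^2)*h + b*h^2/2 + d*h^3/3 := by
    intro a b c d
    rw [← poly_int h (a + c*k - d*k^2) b d]
    apply intervalIntegral.integral_congr
    intro t _; simp only [rtphi]; ring
  have E3 : ∀ a b c d : ℝ, (∫ t in (0:ℝ)..k, rtphi a b c d 0 t)
      = a*k + c*k^2/2 + (-d)*k^3/3 := by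
    intro a b c d
    rw [← poly_int k a c (-d)]
    apply intervalIntegral.integral_congr
    intro t _; simp only [rtphi]; ring
  have EQ : ∀ a b c d : ℝ, (∫ x in (0:ℝ)..h, ∫ y in (0:ℝ)..k, rtphi a b c d x y)
      = (a*k + c*k^2/2 - d*k^3/3)*h + (b*k)*h^2/2 + (d*k)*h^3/3 := by
    intro a b c d
    rw [← poly_int h (a*k + c*k^2/2 - d*k^3/3) (b*k) (d*k)]
    apply intervalIntegral.integral_congr
    intro x _
    have hin : (∫ y in (0:ℝ)..k, rtphi a b c d x y)
        = (a + b*x + d*x^2)*k + c*k^2/2 + (-d)*k^3/3 := by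
      rw [← poly_int k (a + b*x + d*x^2) c (-d)]
      apply intervalIntegral.integral_congr
      intro y _; simp only [rtphi]; ring
    simp only [hin]; ring
  constructor
  · intro a b c d hav x y
    have h0 := hav 0; have h1 := hav 1; have h2 := hav 2; have h3 := hav 3
    simp only [rtEdgeAvg, Matrix.cons_val_zero, Matrix.cons_val_one, Matrix.head_cons,
      Matrix.cons_val_fin_one, Matrix.cons_val', Matrix.empty_val'] at h0 h1 h2 h3
    rw [E0 a b c d] at h0
    rw [E1 a b c d] at h1
    rw [E2 a b c d] at h2
    rw [E3 a b c d] at h3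
    have h0X : a*h + b*h^2/2 + d*h^3/3 = 0 :=
      (mul_eq_zero.mp h0).resolve_left (by positivity)
    have h1X : (a + b*h + d*h^2)*k + c*k^2/2 + (-d)*k^3/3 = 0 :=
      (mul_eq_zero.mp h1).resolve_left (by positivity)
    have h2X : (a + c*k - d*k^2)*h + b*h^2/2 + d*h^3/3 = 0 :=
      (mul_eq_zero.mp h2).resolve_left (by positivity)
    have h3X : a*k + c*k^2/2 + (-d)*k^3/3 = 0 :=
      (mul_eq_zero.mp h3).resolve_left (by positivity)
    have key : d * ((h^2 + k^2) * (h*k)) = 0 := by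
      linear_combination (-3*k)*h0X + (3*h)*h1X + (-3*k)*h2X + (3*h)*h3X
    have hd : d = 0 := by
      rcases mul_eq_zero.mp key with hd | hd
      · exact hd
      · exact absurd hd (by positivity)
    have hbk : b * (h*k) = 0 := by
      linear_combination h1X - h3X - (h^2*k)*hd
    have hb : b = 0 := by
      rcases mul_eq_zero.mp hbk with hb | hb
      · exact hb
      · exact absurd hb (by positivity)
    have hck : c * (k*h) = 0 := by
      linear_combination h2X - h0X + (k^2*h)*hd
    have hc : c = 0 := by
      rcases mul_eq_zero.mp hck with hc | hc
      · exact hc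
      · exact absurd hc (by positivity)
    have hah : a * h = 0 := by
      linear_combination h0X - (h^2/2)*hb - (h^3/3)*hd
    have ha : a = 0 := by
      rcases mul_eq_zero.mp hah with ha | ha
      · exact ha
      · exact absurd ha hh'
    simp [rtphi, ha, hb, hc, hd]
  · refine ⟨![h^2/(2*(h^2+k^2)), k^2/(2*(h^2+k^2)),
      h^2/(2*(h^2+k^2)), k^2/(2*(h^2+k^2))], ?_⟩
    intro a b c d
    rw [EQ a b c d]
    simp only [rtEdgeAvg, Fin.sum_univ_four, Matrix.cons_val_zero, Matrix.cons_val_one,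
      Matrix.head_cons, Matrix.cons_val_two, Matrix.tail_cons, Matrix.cons_val_three]
    rw [E0 a b c d, E1 a b c d, E2 a b c d, E3 a b c d]
    have hS' : h^2 + k^2 ≠ 0 := hS.ne'
    field_simp
    ring
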